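/- Let n ≥ 2, d ≥ 1 and let ρ : sVV_n → Mat_d(ℂ) be a calibrated representation with ρ(y_1) = 0 (so ρ is a calibrated representation of the periplectic Brauer algebra A_n, with ρ(y_j) realizing the action of the Jucys–Murphy element Y_j). Then every diagonal entry of ρ(y_j) is an integer for all j = 2,…,n, and (ρ(y_j))_{ℓ,ℓ} ≠ (ρ(y_{j+1}))_{ℓ,ℓ} for every 1 ≤ ℓ ≤ d and every 1 ≤ j ≤ n−1. -/
import Mathlib


noncomputable section

namespace Periplectic

/-- Generators of the degenerate affine periplectic Brauer algebra on `n` strands: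
`S i` for `1 ≤ i ≤ n-1`, `E i` for `1 ≤ i ≤ n-1`, `Y j` for `1 ≤ j ≤ n`. -/
inductive Gen (n : ℕ) : Type
  | S (i : ℕ) (h : 1 ≤ i ∧ i ≤ n - 1) : Gen n
  | E (i : ℕ) (h : 1 ≤ i ∧ i ≤ n - 1) : Gen n
  | Y (j : ℕ) (h : 1 ≤ j ∧ j ≤ n) : Gen n

/-- The free `ℂ`-algebra on the generators. -/
abbrev FA (n : ℕ) : Type := FreeAlgebra ℂ (Gen n)

def fS (n i : ℕ) (h : 1 ≤ i ∧ i ≤ n - 1) : FA n := FreeAlgebra.ι ℂ (Gen.S i h)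
def fE (n i : ℕ) (h : 1 ≤ i ∧ i ≤ n - 1) : FA n := FreeAlgebra.ι ℂ (Gen.E i h)
def fY (n j : ℕ) (h : 1 ≤ j ∧ j ≤ n) : FA n := FreeAlgebra.ι ℂ (Gen.Y j h)

/-- The defining relations of the degenerate affine periplectic Brauer algebra. -/
inductive Rel (n : ℕ) : FA n → FA n → Prop
  /- (VV1)  s_i² = 1 -/
  | s_sq (i : ℕ) (h : 1 ≤ i ∧ i ≤ n - 1) :
      Rel n (fS n i h * fS n i h) 1
  /- (VV2)(i)  s_i e_j = e_j s_i for |i-j| > 1 -/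
  | se_comm (i j : ℕ) (hi : 1 ≤ i ∧ i ≤ n - 1) (hj : 1 ≤ j ∧ j ≤ n - 1)
      (hij : i + 1 < j ∨ j + 1 < i) :
      Rel n (fS n i hi * fE n j hj) (fE n j hj * fS n i hi)
  /- (VV2)(ii)  e_i e_j = e_j e_i for |i-j| > 1 -/
  | ee_comm (i j : ℕ) (hi : 1 ≤ i ∧ i ≤ n - 1) (hj : 1 ≤ j ∧ j ≤ n - 1)
      (hij : i + 1 < j ∨ j + 1 < i) :
      Rel n (fE n i hi * fE n j hj) (fE n j hj * fE n i hi)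
  /- (VV2)(iii)  e_i y_j = y_j e_i for j ∉ {i, i+1} -/
  | ey_comm (i j : ℕ) (hi : 1 ≤ i ∧ i ≤ n - 1) (hj : 1 ≤ j ∧ j ≤ n)
      (hij : j ≠ i ∧ j ≠ i + 1) :
      Rel n (fE n i hi * fY n j hj) (fY n j hj * fE n i hi)
  /- (VV2)(iv)  y_i y_j = y_j y_i -/
  | yy_comm (i j : ℕ) (hi : 1 ≤ i ∧ i ≤ n) (hj : 1 ≤ j ∧ j ≤ n) :
      Rel n (fY n i hi * fY n j hj) (fY n j hj * fY n i hi)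
  /- (VV3)(i)  s_i s_j = s_j s_i for |i-j| > 1 -/
  | ss_comm (i j : ℕ) (hi : 1 ≤ i ∧ i ≤ n - 1) (hj : 1 ≤ j ∧ j ≤ n - 1)
      (hij : i + 1 < j ∨ j + 1 < i) :
      Rel n (fS n i hi * fS n j hj) (fS n j hj * fS n i hi)
  /- (VV3)(ii)  braid relation -/
  | braid (i : ℕ) (hi : 1 ≤ i ∧ i ≤ n - 1) (hi1 : 1 ≤ i + 1 ∧ i + 1 ≤ n - 1) :
      Rel n (fS n i hi * fS n (i+1) hi1 * fS n i hi)
            (fS n (i+1) hi1 * fS n i hi * fS n (i+1) hi1)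
  /- (VV3)(iii)  s_i y_j = y_j s_i for j ∉ {i, i+1} -/
  | sy_comm (i j : ℕ) (hi : 1 ≤ i ∧ i ≤ n - 1) (hj : 1 ≤ j ∧ j ≤ n)
      (hij : j ≠ i ∧ j ≠ i + 1) :
      Rel n (fS n i hi * fY n j hj) (fY n j hj * fS n i hi)
  /- (VV4)(i)  e_{i+1} e_i e_{i+1} = -e_{i+1} -/
  | eee_up (i : ℕ) (hi : 1 ≤ i ∧ i ≤ n - 1) (hi1 : 1 ≤ i + 1 ∧ i + 1 ≤ n - 1) :
      Rel n (fE n (i+1) hi1 * fE n i hi * fE n (i+1) hi1) (-(fE n (i+1) hi1))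
  /- (VV4)(ii)  e_i e_{i+1} e_i = -e_i -/
  | eee_down (i : ℕ) (hi : 1 ≤ i ∧ i ≤ n - 1) (hi1 : 1 ≤ i + 1 ∧ i + 1 ≤ n - 1) :
      Rel n (fE n i hi * fE n (i+1) hi1 * fE n i hi) (-(fE n i hi))
  /- (VV5)(i)  e_i s_i = e_i  and  s_i e_i = -e_i -/
  | es (i : ℕ) (hi : 1 ≤ i ∧ i ≤ n - 1) :
      Rel n (fE n i hi * fS n i hi) (fE n i hi)
  | se (i : ℕ) (hi : 1 ≤ i ∧ i ≤ n - 1) :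
      Rel n (fS n i hi * fE n i hi) (-(fE n i hi))
  /- (VV5)(ii)  s_i e_{i+1} e_i = s_{i+1} e_i -/
  | see (i : ℕ) (hi : 1 ≤ i ∧ i ≤ n - 1) (hi1 : 1 ≤ i + 1 ∧ i + 1 ≤ n - 1) :
      Rel n (fS n i hi * fE n (i+1) hi1 * fE n i hi) (fS n (i+1) hi1 * fE n i hi)
  /- (VV5)(iii)  s_{i+1} e_i e_{i+1} = -s_i e_{i+1} -/
  | see' (i : ℕ) (hi : 1 ≤ i ∧ i ≤ n - 1) (hi1 : 1 ≤ i + 1 ∧ i + 1 ≤ n - 1) :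
      Rel n (fS n (i+1) hi1 * fE n i hi * fE n (i+1) hi1) (-(fS n i hi * fE n (i+1) hi1))
  /- (VV5)(iv)  e_{i+1} e_i s_{i+1} = e_{i+1} s_i -/
  | ees (i : ℕ) (hi : 1 ≤ i ∧ i ≤ n - 1) (hi1 : 1 ≤ i + 1 ∧ i + 1 ≤ n - 1) :
      Rel n (fE n (i+1) hi1 * fE n i hi * fS n (i+1) hi1) (fE n (i+1) hi1 * fS n i hi)
  /- (VV5)(v)  e_i e_{i+1} s_i = -e_i s_{i+1} -/
  | ees' (i : ℕ) (hi : 1 ≤ i ∧ i ≤ n - 1) (hi1 : 1 ≤ i + 1 ∧ i + 1 ≤ n - 1) :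
      Rel n (fE n i hi * fE n (i+1) hi1 * fS n i hi) (-(fE n i hi * fS n (i+1) hi1))
  /- (VV6)  e_i² = 0 -/
  | e_sq (i : ℕ) (hi : 1 ≤ i ∧ i ≤ n - 1) :
      Rel n (fE n i hi * fE n i hi) 0
  /- (VV7)(i)  s_i y_i - y_{i+1} s_i = -e_i - 1 -/
  | sy_rel (i : ℕ) (hi : 1 ≤ i ∧ i ≤ n - 1) (hyi : 1 ≤ i ∧ i ≤ n)
      (hyi1 : 1 ≤ i + 1 ∧ i + 1 ≤ n) :
      Rel n (fS n i hi * fY n i hyi - fY n (i+1) hyi1 * fS n i hi) (-(fE n i hi) - 1)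
  /- (VV7)(ii)  y_i s_i - s_i y_{i+1} = e_i - 1 -/
  | ys_rel (i : ℕ) (hi : 1 ≤ i ∧ i ≤ n - 1) (hyi : 1 ≤ i ∧ i ≤ n)
      (hyi1 : 1 ≤ i + 1 ∧ i + 1 ≤ n) :
      Rel n (fY n i hyi * fS n i hi - fS n i hi * fY n (i+1) hyi1) (fE n i hi - 1)
  /- (VV8)(i)  e_i (y_i - y_{i+1}) = -e_i -/
  | e_ydiff (i : ℕ) (hi : 1 ≤ i ∧ i ≤ n - 1) (hyi : 1 ≤ i ∧ i ≤ n)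
      (hyi1 : 1 ≤ i + 1 ∧ i + 1 ≤ n) :
      Rel n (fE n i hi * (fY n i hyi - fY n (i+1) hyi1)) (-(fE n i hi))
  /- (VV8)(ii)  (y_i - y_{i+1}) e_i = e_i -/
  | ydiff_e (i : ℕ) (hi : 1 ≤ i ∧ i ≤ n - 1) (hyi : 1 ≤ i ∧ i ≤ n)
      (hyi1 : 1 ≤ i + 1 ∧ i + 1 ≤ n) :
      Rel n ((fY n i hyi - fY n (i+1) hyi1) * fE n i hi) (fE n i hi)

/-- The degenerate affine periplectic Brauer algebra `sVV n`. -/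
abbrev sVV (n : ℕ) : Type := RingQuot (Rel n)

/-- The generator `s_i` of `sVV n`. -/
def sgen (n i : ℕ) (h : 1 ≤ i ∧ i ≤ n - 1) : sVV n :=
  RingQuot.mkAlgHom ℂ (Rel n) (fS n i h)

/-- The generator `e_i` of `sVV n`. -/
def egen (n i : ℕ) (h : 1 ≤ i ∧ i ≤ n - 1) : sVV n :=
  RingQuot.mkAlgHom ℂ (Rel n) (fE n i h)

/-- The generator `y_j` of `sVV n`. -/
def ygen (n j : ℕ) (h : 1 ≤ j ∧ j ≤ n) : sVV n :=
  RingQuot.mkAlgHom ℂ (Rel n) (fY n j h)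

/-- Total version of `s_i` (equal to `sgen n i _` when `1 ≤ i ≤ n-1`, and `0` otherwise). -/
def ss (n i : ℕ) : sVV n := if h : 1 ≤ i ∧ i ≤ n - 1 then sgen n i h else 0

/-- Total version of `e_i`. -/
def ee (n i : ℕ) : sVV n := if h : 1 ≤ i ∧ i ≤ n - 1 then egen n i h else 0

/-- Total version of `y_j`. -/
def yy (n j : ℕ) : sVV n := if h : 1 ≤ j ∧ j ≤ n then ygen n j h else 0


/-- A calibrated representation of `sVV n` of dimension `d`: a unital `ℂ`-algebra homomorphism
to `d × d` matrices under which every `y_j` acts by a diagonal matrix. -/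
def IsCalibrated {n d : ℕ} (ρ : sVV n →ₐ[ℂ] Matrix (Fin d) (Fin d) ℂ) : Prop :=
  ∀ j : ℕ, 1 ≤ j → j ≤ n → (ρ (yy n j)).IsDiag

/-- Indecomposability of a matrix representation of `sVV n`: there is no direct sum
decomposition `ℂ^d = U ⊕ W` with `U, W` nonzero subspaces invariant under all `ρ a`. -/
def IsIndecomposableRep {n d : ℕ} (ρ : sVV n →ₐ[ℂ] Matrix (Fin d) (Fin d) ℂ) : Prop :=
  ¬ ∃ U W : Submodule ℂ (Fin d → ℂ), U ≠ ⊥ ∧ W ≠ ⊥ ∧ IsCompl U W ∧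
      (∀ a : sVV n, ∀ x ∈ U, (ρ a).mulVec x ∈ U) ∧
      (∀ a : sVV n, ∀ x ∈ W, (ρ a).mulVec x ∈ W)

/-- Entry of a product with a diagonal matrix on the right. -/
lemma mul_diag_apply {d : ℕ} (M B : Matrix (Fin d) (Fin d) ℂ) (hB : B.IsDiag)
    (k l : Fin d) : (M * B) k l = M k l * B l l := by
  rw [Matrix.mul_apply, Finset.sum_eq_single l]
  · intro b _ hb
    rw [hB hb, mul_zero]
  · intro h; exact absurd (Finset.mem_univ l) h

/-- Entry of a product with a diagonal matrix on the left. -/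
lemma diag_mul_apply {d : ℕ} (B M : Matrix (Fin d) (Fin d) ℂ) (hB : B.IsDiag)
    (k l : Fin d) : (B * M) k l = B k k * M k l := by
  rw [Matrix.mul_apply, Finset.sum_eq_single k]
  · intro b _ hb
    rw [hB (Ne.symm hb), zero_mul]
  · intro h; exact absurd (Finset.mem_univ k) h

/-- The core matrix computation: from the local relations satisfied by the images of
`s_i, e_i, y_i, y_{i+1}` in a calibrated representation, the diagonal entries of the images
of `y_i` and `y_{i+1}` differ, and integrality propagates from `y_i` to `y_{i+1}`. -/
lemma keyMatrix {d : ℕ} {S E A B : Matrix (Fin d) (Fin d) ℂ}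
    (hA : A.IsDiag) (hB : B.IsDiag)
    (h1 : S * A - B * S = -E - 1) (h2 : A * S - S * B = E - 1)
    (hS : S * S = 1) (h3 : E * (A - B) = -E) (h4 : (A - B) * E = E) (ℓ : Fin d) :
    A ℓ ℓ ≠ B ℓ ℓ ∧ ((∀ k, ∃ m : ℤ, A k k = m) → ∃ m : ℤ, B ℓ ℓ = m) := by
  have hAB : (A - B).IsDiag := hA.sub hB
  have E1 : ∀ k l, S k l * A l l - B k k * S k l
      = -(E k l) - (if k = l then (1:ℂ) else 0) := by
    intro k l
    have h := congrFun (congrFun h1 k) l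
    rwa [Matrix.sub_apply, Matrix.sub_apply, Matrix.neg_apply, Matrix.one_apply,
      mul_diag_apply S A hA, diag_mul_apply B S hB] at h
  have E2 : ∀ k l, A k k * S k l - S k l * B l l
      = E k l - (if k = l then (1:ℂ) else 0) := by
    intro k l
    have h := congrFun (congrFun h2 k) l
    rwa [Matrix.sub_apply, Matrix.sub_apply, Matrix.one_apply,
      mul_diag_apply S B hB, diag_mul_apply A S hA] at h
  have E3 : ∀ k l, E k l * (A l l - B l l) = -(E k l) := by
    intro k l
    have h := congrFun (congrFun h3 k) l
    rwa [Matrix.neg_apply, mul_diag_apply E (A - B) hAB, Matrix.sub_apply] at h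
  have E4 : ∀ k l, (A k k - B k k) * E k l = E k l := by
    intro k l
    have h := congrFun (congrFun h4 k) l
    rwa [diag_mul_apply (A - B) E hAB, Matrix.sub_apply] at h
  have d1 := E1 ℓ ℓ
  have d2 := E2 ℓ ℓ
  rw [if_pos rfl] at d1 d2
  have hE0 : E ℓ ℓ = 0 := by linear_combination (d1 - d2) / 2
  have hsc : S ℓ ℓ * (A ℓ ℓ - B ℓ ℓ) = -1 := by linear_combination (d1 + d2) / 2
  constructor
  · intro hEq
    rw [hEq, sub_self, mul_zero] at hsc
    exact one_ne_zero (neg_eq_zero.mp hsc.symm)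
  · intro hAint
    by_cases hk : ∃ k, k ≠ ℓ ∧ S ℓ k * S k ℓ ≠ 0
    · obtain ⟨k, hkl, hSprod⟩ := hk
      have hSkl : S k ℓ ≠ 0 := fun h => hSprod (by rw [h, mul_zero])
      have hSlk : S ℓ k ≠ 0 := fun h => hSprod (by rw [h, zero_mul])
      by_cases hEkl : E k ℓ = 0
      · by_cases hElk : E ℓ k = 0
        · -- B ℓ ℓ = A k k
          have h := E2 k ℓ
          rw [if_neg hkl, hEkl, sub_zero] at h
          have : (A k k - B ℓ ℓ) * S k ℓ = 0 := by linear_combination h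
          have hABk : A k k = B ℓ ℓ :=
            sub_eq_zero.mp ((mul_eq_zero.mp this).resolve_right hSkl)
          obtain ⟨m, hm⟩ := hAint k
          exact ⟨m, by rw [← hABk, hm]⟩
        · -- A ℓ ℓ - B ℓ ℓ = 1
          have h := E4 ℓ ℓ
          have h' := E4 ℓ k
          have : (A ℓ ℓ - B ℓ ℓ - 1) * E ℓ k = 0 := by linear_combination h'
          have hc : A ℓ ℓ - B ℓ ℓ = 1 := by
            have := (mul_eq_zero.mp this).resolve_right hElk
            linear_combination this
          obtain ⟨m, hm⟩ := hAint ℓ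
          refine ⟨m - 1, ?_⟩
          push_cast
          rw [← hm]
          linear_combination -hc
      · -- A ℓ ℓ - B ℓ ℓ = -1
        have h := E3 k ℓ
        have : (A ℓ ℓ - B ℓ ℓ + 1) * E k ℓ = 0 := by linear_combination h
        have hc : A ℓ ℓ - B ℓ ℓ = -1 := by
          have := (mul_eq_zero.mp this).resolve_right hEkl
          linear_combination this
        obtain ⟨m, hm⟩ := hAint ℓ
        refine ⟨m + 1, ?_⟩
        push_cast
        rw [← hm]
        linear_combination -hc
    · -- all off-diagonal products vanish, so S ℓ ℓ ^ 2 = 1 and A ℓ ℓ - B ℓ ℓ = ±1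
      push_neg at hk
      have hss : S ℓ ℓ * S ℓ ℓ = 1 := by
        have h := congrFun (congrFun hS ℓ) ℓ
        rw [Matrix.mul_apply, Matrix.one_apply_eq] at h
        rw [← h]
        exact (Finset.sum_eq_single ℓ (fun b _ hb => hk b hb) (fun h => absurd (Finset.mem_univ ℓ) h)).symm
      have hc2 : (A ℓ ℓ - B ℓ ℓ) * (A ℓ ℓ - B ℓ ℓ) = 1 := by
        linear_combination (S ℓ ℓ * (A ℓ ℓ - B ℓ ℓ) - 1) * hsc
          - (A ℓ ℓ - B ℓ ℓ) * (A ℓ ℓ - B ℓ ℓ) * hss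
      have : (A ℓ ℓ - B ℓ ℓ - 1) * (A ℓ ℓ - B ℓ ℓ + 1) = 0 := by linear_combination hc2
      obtain ⟨m, hm⟩ := hAint ℓ
      rcases mul_eq_zero.mp this with h | h
      · refine ⟨m - 1, ?_⟩
        push_cast
        rw [← hm]
        linear_combination -h
      · refine ⟨m + 1, ?_⟩
        push_cast
        rw [← hm]
        linear_combination -h

/-- In a calibrated representation of `sVV n` with `ρ(y_1) = 0` (i.e. a
calibrated representation of the periplectic Brauer algebra, with `ρ(y_j)` realizing the
Jucys–Murphy element `Y_j`), all diagonal entries of `ρ(y_j)` are integers for `j = 2, …, n`,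
and consecutive diagonal entries differ:
`(ρ(y_j))_{ℓℓ} ≠ (ρ(y_{j+1}))_{ℓℓ}` for `1 ≤ j ≤ n-1`. -/
theorem calibrated_An_eigenvalues (n d : ℕ) (hn : 2 ≤ n) (hd : 1 ≤ d)
    (ρ : sVV n →ₐ[ℂ] Matrix (Fin d) (Fin d) ℂ) (hcal : IsCalibrated ρ)
    (h1 : ρ (yy n 1) = 0) :
    (∀ j : ℕ, 2 ≤ j → j ≤ n → ∀ ℓ : Fin d, ∃ m : ℤ, ρ (yy n j) ℓ ℓ = (m : ℂ)) ∧
    (∀ j : ℕ, 1 ≤ j → j ≤ n - 1 → ∀ ℓ : Fin d,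
      ρ (yy n j) ℓ ℓ ≠ ρ (yy n (j+1)) ℓ ℓ) := by
  have hyyg : ∀ j (hj : 1 ≤ j ∧ j ≤ n), yy n j = ygen n j hj := fun j hj => dif_pos hj
  have key : ∀ i, 1 ≤ i → i ≤ n - 1 → ∀ ℓ : Fin d,
      ρ (yy n i) ℓ ℓ ≠ ρ (yy n (i+1)) ℓ ℓ ∧
      ((∀ k, ∃ m : ℤ, ρ (yy n i) k k = m) → ∃ m : ℤ, ρ (yy n (i+1)) ℓ ℓ = m) := by
    intro i h1i h2i
    have hi : 1 ≤ i ∧ i ≤ n - 1 := ⟨h1i, h2i⟩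
    have hyi : 1 ≤ i ∧ i ≤ n := ⟨h1i, by omega⟩
    have hyi1 : 1 ≤ i + 1 ∧ i + 1 ≤ n := ⟨by omega, by omega⟩
    have hA : (ρ (ygen n i hyi)).IsDiag := by
      have h := hcal i h1i hyi.2
      rwa [hyyg i hyi] at h
    have hB : (ρ (ygen n (i+1) hyi1)).IsDiag := by
      have h := hcal (i+1) hyi1.1 hyi1.2
      rwa [hyyg (i+1) hyi1] at h
    have e1 : ρ (sgen n i hi) * ρ (ygen n i hyi)
        - ρ (ygen n (i+1) hyi1) * ρ (sgen n i hi) = -(ρ (egen n i hi)) - 1 := by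
      have h := congrArg ρ (RingQuot.mkAlgHom_rel ℂ (Rel.sy_rel i hi hyi hyi1))
      simpa [sgen, egen, ygen] using h
    have e2 : ρ (ygen n i hyi) * ρ (sgen n i hi)
        - ρ (sgen n i hi) * ρ (ygen n (i+1) hyi1) = ρ (egen n i hi) - 1 := by
      have h := congrArg ρ (RingQuot.mkAlgHom_rel ℂ (Rel.ys_rel i hi hyi hyi1))
      simpa [sgen, egen, ygen] using h
    have eS : ρ (sgen n i hi) * ρ (sgen n i hi) = 1 := by
      have h := congrArg ρ (RingQuot.mkAlgHom_rel ℂ (Rel.s_sq i hi))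
      simpa [sgen] using h
    have e3 : ρ (egen n i hi) * (ρ (ygen n i hyi) - ρ (ygen n (i+1) hyi1))
        = -(ρ (egen n i hi)) := by
      have h := congrArg ρ (RingQuot.mkAlgHom_rel ℂ (Rel.e_ydiff i hi hyi hyi1))
      simpa [sgen, egen, ygen, mul_sub] using h
    have e4 : (ρ (ygen n i hyi) - ρ (ygen n (i+1) hyi1)) * ρ (egen n i hi)
        = ρ (egen n i hi) := by
      have h := congrArg ρ (RingQuot.mkAlgHom_rel ℂ (Rel.ydiff_e i hi hyi hyi1))
      simpa [sgen, egen, ygen, sub_mul] using h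
    intro ℓ
    rw [hyyg i hyi, hyyg (i+1) hyi1]
    exact keyMatrix hA hB e1 e2 eS e3 e4 ℓ
  have main : ∀ j, 1 ≤ j → j ≤ n → ∀ ℓ : Fin d, ∃ m : ℤ, ρ (yy n j) ℓ ℓ = (m : ℂ) := by
    intro j
    induction j with
    | zero => omega
    | succ j ih =>
      intro _ hjn ℓ
      rcases Nat.eq_zero_or_pos j with hj0 | hj1
      · subst hj0
        exact ⟨0, by rw [h1]; simp⟩
      · exact (key j hj1 (by omega) ℓ).2 (fun k => ih hj1 (by omega) k)
  refine ⟨fun j hj2 hjn ℓ => main j (by omega) hjn ℓ, fun j hj1 hjn ℓ => (key j hj1 hjn ℓ).1⟩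

end Periplectic
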